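/- For every composition α of n, the H_n(0)-module V_α = M_α/N_α is indecomposable: every idempotent module endomorphism of V_α is either 0 or the identity. -/

import Mathlib

/-- The 0-Hecke operator `π_{i+1}` on words `w : Fin n → ℕ`. -/
def heckeWord {n : ℕ} (i : Fin (n - 1)) (w : Fin n → ℕ) : Fin n → ℕ :=
  let p : Fin n := ⟨i, by have := i.isLt; omega⟩
  let q : Fin n := ⟨(i : ℕ) + 1, by have := i.isLt; omega⟩
  if w p < w q then w ∘ Equiv.swap p q else w

/-- A word is a `𝒴`-word if every occurrence of a letter `c+2` is preceded by an
occurrence of `c+1`. -/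
def IsYWordF {n : ℕ} (w : Fin n → ℕ) : Prop :=
  ∀ (p : Fin n) (c : ℕ), w p = c + 2 → ∃ q, q < p ∧ w q = c + 1

/-- A word has content `α`. -/
def WordHasContent {n : ℕ} (c : Composition n) (w : Fin n → ℕ) : Prop :=
  (∀ p, 1 ≤ w p ∧ w p ≤ c.length) ∧
  ∀ j : Fin c.length,
    (Finset.univ.filter fun p => w p = (j : ℕ) + 1).card = c.blocksFun j

/-- The quotient module `V_α = M_α / N_α`, realized with basis the `𝒴`-words of
content `α`. -/
abbrev Vmod (n : ℕ) (c : Composition n) :=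
  {w : Fin n → ℕ // WordHasContent c w ∧ IsYWordF w} →₀ ℚ

open Classical in
/-- The action of the 0-Hecke generator `π_{i+1}` on `V_α`: a basis `𝒴`-word is sent
to its image under `heckeWord` if that image is again a `𝒴`-word, and to `0`
otherwise (i.e. modulo the span `N_α` of non-`𝒴`-words). -/
noncomputable def heckeOp (n : ℕ) (c : Composition n) (i : Fin (n - 1)) :
    Vmod n c →ₗ[ℚ] Vmod n c :=
  Finsupp.lsum ℚ fun w =>
    LinearMap.toSpanSingleton ℚ (Vmod n c)
      (if h : WordHasContent c (heckeWord i w.val) ∧ IsYWordF (heckeWord i w.val)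
        then Finsupp.single (⟨heckeWord i w.val, h⟩ :
          {w : Fin n → ℕ // WordHasContent c w ∧ IsYWordF w}) (1 : ℚ)
        else 0)

section Aux

def pI {n : ℕ} (i : Fin (n - 1)) : Fin n := ⟨i, by have := i.isLt; omega⟩
def qI {n : ℕ} (i : Fin (n - 1)) : Fin n := ⟨(i : ℕ) + 1, by have := i.isLt; omega⟩

lemma heckeWord_def {n : ℕ} (i : Fin (n - 1)) (w : Fin n → ℕ) :
    heckeWord i w = if w (pI i) < w (qI i) then w ∘ Equiv.swap (pI i) (qI i) else w := rfl

lemma heckeWord_not_ascent {n : ℕ} (i : Fin (n - 1)) (w : Fin n → ℕ) :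
    ¬ (heckeWord i w (pI i) < heckeWord i w (qI i)) := by
  rw [heckeWord_def]
  by_cases h : w (pI i) < w (qI i)
  · rw [if_pos h]
    simp only [Function.comp_apply, Equiv.swap_apply_left, Equiv.swap_apply_right]
    omega
  · rw [if_neg h]; exact h

lemma heckeWord_of_swap {n : ℕ} (i : Fin (n - 1)) (u : Fin n → ℕ)
    (h : u (qI i) < u (pI i)) :
    heckeWord i (u ∘ Equiv.swap (pI i) (qI i)) = u := by
  rw [heckeWord_def]
  have hlt : (u ∘ Equiv.swap (pI i) (qI i)) (pI i) < (u ∘ Equiv.swap (pI i) (qI i)) (qI i) := by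
    simp only [Function.comp_apply, Equiv.swap_apply_left, Equiv.swap_apply_right]
    exact h
  rw [if_pos hlt]
  funext p
  simp [Function.comp_apply, Equiv.swap_apply_self]

variable {n : ℕ} (c : Composition n)

lemma lt_sizeUpTo_succ' (p : Fin n) : (p : ℕ) < c.sizeUpTo ((c.index p : ℕ) + 1) := by
  have := c.lt_sizeUpTo_index_succ p
  rwa [Fin.val_succ] at this

lemma index_eq_of_bounds {j : Fin c.length} {p : Fin n}
    (h1 : c.sizeUpTo j ≤ p) (h2 : (p : ℕ) < c.sizeUpTo ((j : ℕ) + 1)) : c.index p = j := by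
  by_contra hne
  rcases lt_or_gt_of_ne (fun h => hne (Fin.ext h) : (c.index p : ℕ) ≠ (j : ℕ)) with hlt | hgt
  · have h3 : c.sizeUpTo ((c.index p : ℕ) + 1) ≤ c.sizeUpTo j := c.monotone_sizeUpTo hlt
    have h4 := lt_sizeUpTo_succ' c p
    omega
  · have h3 : c.sizeUpTo ((j : ℕ) + 1) ≤ c.sizeUpTo (c.index p) := c.monotone_sizeUpTo hgt
    have h4 := c.sizeUpTo_index_le p
    omega

lemma card_filter_index_eq (j : Fin c.length) :
    (Finset.univ.filter fun p : Fin n => c.index p = j).card = c.blocksFun j := by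
  rw [← Fintype.card_fin (c.blocksFun j), ← Finset.card_univ]
  refine (Finset.card_bij (fun x _ => c.embedding j x) ?_ ?_ ?_).symm
  · intro x _
    simp only [Finset.mem_filter, Finset.mem_univ, true_and]
    exact c.index_embedding j x
  · intro x _ y _ hxy
    exact (c.embedding j).injective hxy
  · intro p hp
    simp only [Finset.mem_filter, Finset.mem_univ, true_and] at hp
    subst hp
    exact ⟨c.invEmbedding p, Finset.mem_univ _, c.embedding_comp_inv p⟩

def eword : Fin n → ℕ := fun p => (c.index p : ℕ) + 1

lemma eword_content : WordHasContent c (eword c) := by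
  constructor
  · intro p
    refine ⟨Nat.le_add_left _ _, ?_⟩
    show (c.index p : ℕ) + 1 ≤ c.length
    have := (c.index p).isLt; omega
  · intro j
    rw [← card_filter_index_eq c j]
    congr 1
    ext p
    simp only [Finset.mem_filter, Finset.mem_univ, true_and]
    simp only [eword]
    constructor
    · intro h; exact Fin.ext (by omega)
    · intro h; rw [h]

lemma eword_isY : IsYWordF (eword c) := by
  intro p k hp
  have hk : (c.index p : ℕ) = k + 1 := by simpa [eword] using hp
  have hkl : k < c.length := by have := (c.index p).isLt; omega
  set j : Fin c.length := ⟨k, hkl⟩ with hj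
  have hpos : 0 < c.blocksFun j := c.one_le_blocksFun j
  refine ⟨c.embedding j ⟨0, hpos⟩, ?_, ?_⟩
  · have h1 : (c.embedding j ⟨0, hpos⟩ : ℕ) = c.sizeUpTo k := by
      rw [c.coe_embedding]; simp [hj]
    have h2 : c.sizeUpTo (k + 1) ≤ (p : ℕ) := by
      have := c.sizeUpTo_index_le p
      rwa [hk] at this
    have h3 : c.sizeUpTo k < c.sizeUpTo (k + 1) := c.sizeUpTo_strict_mono hkl
    rw [Fin.lt_def, h1]
    omega
  · show (c.index _ : ℕ) + 1 = k + 1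
    rw [c.index_embedding j ⟨0, hpos⟩]

/-- lower bound: if all earlier positions agree with eword, then u p ≥ index p + 1 -/
lemma eword_lower {u : Fin n → ℕ} (hu : WordHasContent c u) (p : Fin n)
    (IH : ∀ q : Fin n, q < p → u q = eword c q) : (c.index p : ℕ) + 1 ≤ u p := by
  by_contra hlt
  push_neg at hlt
  have h1 : 1 ≤ u p := (hu.1 p).1
  have hil : (u p - 1) < c.length := by
    have := (c.index p).isLt; omega
  set j : Fin c.length := ⟨u p - 1, hil⟩ with hj
  have hup : u p = (j : ℕ) + 1 := by simp [hj]; omega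
  have hsub : insert p (Finset.univ.filter fun q : Fin n => c.index q = j) ⊆
      Finset.univ.filter fun q : Fin n => u q = (j : ℕ) + 1 := by
    intro q hq
    simp only [Finset.mem_insert, Finset.mem_filter, Finset.mem_univ, true_and] at hq ⊢
    rcases hq with rfl | hq
    · exact hup
    · have hql : (q : ℕ) < c.sizeUpTo ((j : ℕ) + 1) := by
        have := lt_sizeUpTo_succ' c q
        rwa [hq] at this
      have hqp : q < p := by
        rw [Fin.lt_def]
        have h5 : c.sizeUpTo ((j : ℕ) + 1) ≤ c.sizeUpTo (c.index p) :=
          c.monotone_sizeUpTo (by simp [hj]; omega)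
        have h6 := c.sizeUpTo_index_le p
        omega
      have := IH q hqp
      rw [this, eword, hq]
  have hpnot : p ∉ (Finset.univ.filter fun q : Fin n => c.index q = j) := by
    simp only [Finset.mem_filter, Finset.mem_univ, true_and]
    intro h
    have : (c.index p : ℕ) = (j : ℕ) := by rw [h]
    simp only [hj] at this
    omega
  have hcard := Finset.card_le_card hsub
  rw [Finset.card_insert_of_notMem hpnot, card_filter_index_eq c j, hu.2 j] at hcard
  omega

/-- L1: a Y-word of content c that is weakly decreasing within blocks is eword. -/
lemma eq_eword_of_blockdec {u : Fin n → ℕ} (hu : WordHasContent c u) (hY : IsYWordF u)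
    (hdec : ∀ i : Fin (n - 1), c.index (pI i) = c.index (qI i) → u (qI i) ≤ u (pI i)) :
    u = eword c := by
  have key : ∀ k : ℕ, ∀ p : Fin n, (p : ℕ) = k → u p = eword c p := by
    intro k
    induction k using Nat.strong_induction_on with
    | _ k IHk =>
      intro p hp
      have IH : ∀ q : Fin n, q < p → u q = eword c q := by
        intro q hq
        exact IHk q (by rw [← hp]; exact hq) q rfl
      have hlow := eword_lower c hu p IH
      have hupper : u p ≤ (c.index p : ℕ) + 1 := by
        by_contra hbig
        push_neg at hbig
        have hs : c.sizeUpTo (c.index p) ≤ (p : ℕ) := c.sizeUpTo_index_le p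
        rcases eq_or_lt_of_le hs with hps | hps
        · -- p is the first position of its block: use the Y-property
          obtain ⟨q, hqp, hq⟩ := hY p (u p - 2) (by omega)
          rw [IH q hqp] at hq
          have hiq : (c.index q : ℕ) + 1 = u p - 2 + 1 := hq
          have h2 : c.sizeUpTo (c.index p) ≤ c.sizeUpTo (c.index q) :=
            c.monotone_sizeUpTo (by omega)
          have h3 := c.sizeUpTo_index_le q
          rw [Fin.lt_def] at hqp
          omega
        · -- p is not first in its block: use block-decreasingness
          have hin : (p : ℕ) - 1 < n - 1 := by have := p.isLt; omega
          have hp1 : 1 ≤ (p : ℕ) := by omega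
          set i : Fin (n - 1) := ⟨(p : ℕ) - 1, hin⟩ with hi
          have hqIp : qI i = p := by
            simp only [qI, hi]; exact Fin.ext (by simp; omega)
          have hpIlt : pI i < p := by
            simp only [pI, hi, Fin.lt_def]; omega
          have hidx : c.index (pI i) = c.index p := by
            apply index_eq_of_bounds
            · show c.sizeUpTo (c.index p) ≤ ((pI i : Fin n) : ℕ)
              simp only [pI, hi]
              omega
            · have := lt_sizeUpTo_succ' c p
              simp only [pI, hi]
              omega
          have hd := hdec i (by rw [hqIp, hidx])
          rw [hqIp, IH (pI i) hpIlt] at hd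
          have he : eword c (pI i) = (c.index p : ℕ) + 1 := by
            rw [eword]; rw [hidx]
          omega
      rw [eword]
      omega
  funext p
  exact key (p : ℕ) p rfl

/-- monotonicity from adjacent comparisons -/
lemma mono_of_adj {u : Fin n → ℕ}
    (hinc : ∀ i : Fin (n - 1), u (pI i) ≤ u (qI i)) {a b : Fin n} (hab : a ≤ b) :
    u a ≤ u b := by
  obtain ⟨d, hd⟩ := Nat.exists_eq_add_of_le (Fin.le_def.mp hab)
  induction d generalizing b with
  | zero =>
    have : a = b := Fin.ext (by omega)
    rw [this]
  | succ d IHd =>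
    have hb1 : (b : ℕ) - 1 < n := by have := b.isLt; omega
    set b' : Fin n := ⟨(b : ℕ) - 1, hb1⟩ with hb'
    have h1 : u a ≤ u b' := by
      apply IHd
      · rw [Fin.le_def]; simp [hb']; omega
      · simp [hb']; omega
    have hbn : (b : ℕ) - 1 < n - 1 := by have := b.isLt; omega
    have h2 : u b' ≤ u b := by
      have := hinc ⟨(b : ℕ) - 1, hbn⟩
      have hpe : pI ⟨(b : ℕ) - 1, hbn⟩ = b' := rfl
      have hqe : qI ⟨(b : ℕ) - 1, hbn⟩ = b := Fin.ext (by simp [qI]; omega)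
      rwa [hpe, hqe] at this
    exact le_trans h1 h2

/-- L4: a weakly increasing Y-word of content c is eword. -/
lemma eq_eword_of_inc {u : Fin n → ℕ} (hu : WordHasContent c u) (hY : IsYWordF u)
    (hinc : ∀ i : Fin (n - 1), u (pI i) ≤ u (qI i)) :
    u = eword c := by
  have key : ∀ k : ℕ, ∀ p : Fin n, (p : ℕ) = k → u p = eword c p := by
    intro k
    induction k using Nat.strong_induction_on with
    | _ k IHk =>
      intro p hp
      have IH : ∀ q : Fin n, q < p → u q = eword c q := by
        intro q hq
        exact IHk q (by rw [← hp]; exact hq) q rfl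
      have hlow := eword_lower c hu p IH
      have hupper : u p ≤ (c.index p : ℕ) + 1 := by
        by_contra hbig
        push_neg at hbig
        -- positions with letter (index p)+1 are contained in [sizeUpTo (index p), p)
        have hsub : (Finset.univ.filter fun q : Fin n => u q = (c.index p : ℕ) + 1) ⊆
            Finset.univ.filter fun q : Fin n =>
              c.sizeUpTo (c.index p) ≤ (q : ℕ) ∧ (q : ℕ) < (p : ℕ) := by
          intro q hq
          simp only [Finset.mem_filter, Finset.mem_univ, true_and] at hq ⊢
          rcases lt_or_ge q p with hqp | hpq
          · have := IH q hqp
            rw [this, eword] at hq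
            have hiq : c.index q = c.index p := Fin.ext (by omega)
            have := c.sizeUpTo_index_le q
            rw [hiq] at this
            rw [Fin.lt_def] at hqp
            exact ⟨this, hqp⟩
          · exfalso
            have := mono_of_adj hinc hpq
            omega
        have hcardle := Finset.card_le_card hsub
        rw [hu.2 (c.index p)] at hcardle
        -- the interval has size < blocksFun (index p)
        have hinj : (Finset.univ.filter fun q : Fin n =>
              c.sizeUpTo (c.index p) ≤ (q : ℕ) ∧ (q : ℕ) < (p : ℕ)).card ≤
            (Finset.Ico (c.sizeUpTo (c.index p)) (p : ℕ)).card := by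
          apply Finset.card_le_card_of_injOn (fun q : Fin n => (q : ℕ))
          · intro q hq
            simp only [Finset.mem_coe, Finset.mem_filter, Finset.mem_univ, true_and] at hq
            simp only [Finset.mem_coe, Finset.mem_Ico]
            exact hq
          · intro x _ y _ hxy
            exact Fin.ext hxy
        rw [Nat.card_Ico] at hinj
        have h7 := c.sizeUpTo_index_le p
        have h5 := lt_sizeUpTo_succ' c p
        have h6 : c.sizeUpTo ((c.index p : ℕ) + 1) =
            c.sizeUpTo (c.index p) + c.blocksFun (c.index p) := by
          exact c.sizeUpTo_succ (c.index p).isLt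
        omega
      rw [eword]
      omega
  funext p
  exact key (p : ℕ) p rfl

/-- content is invariant under any swap -/
lemma content_swap {u : Fin n → ℕ} (hu : WordHasContent c u) (x y : Fin n) :
    WordHasContent c (u ∘ Equiv.swap x y) := by
  constructor
  · intro p; exact hu.1 _
  · intro j
    rw [← hu.2 j]
    apply Finset.card_bij (fun p _ => Equiv.swap x y p)
    · intro p hp
      simp only [Finset.mem_filter, Finset.mem_univ, true_and, Function.comp_apply] at hp ⊢
      exact hp
    · intro p _ q _ hpq
      exact (Equiv.swap x y).injective hpq
    · intro p hp
      simp only [Finset.mem_filter, Finset.mem_univ, true_and] at hp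
      refine ⟨Equiv.swap x y p, ?_, ?_⟩
      · simp only [Finset.mem_filter, Finset.mem_univ, true_and, Function.comp_apply,
          Equiv.swap_apply_self]
        exact hp
      · simp [Equiv.swap_apply_self]

/-- L2: swapping a strict descent at adjacent positions preserves Y-words -/
lemma isY_swap {u : Fin n → ℕ} (hY : IsYWordF u) (i : Fin (n - 1))
    (hdesc : u (qI i) < u (pI i)) :
    IsYWordF (u ∘ Equiv.swap (pI i) (qI i)) := by
  intro p k hp
  set x := pI i with hx
  set y := qI i with hy
  have hxy : (x : ℕ) + 1 = (y : ℕ) := by simp [hx, hy, pI, qI]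
  have hxyne : x ≠ y := by intro h; rw [h] at hxy; omega
  simp only [Function.comp_apply] at hp
  by_cases hpx : p = x
  · -- v x = u y = k+2; use Y at y
    rw [hpx, Equiv.swap_apply_left] at hp
    obtain ⟨q, hqy, hq⟩ := hY y k hp
    have hqx : q ≠ x := by
      intro h
      rw [h] at hq
      omega
    have hqlt : q < x := by
      rw [Fin.lt_def] at hqy ⊢
      have : (q : ℕ) ≠ (x : ℕ) := fun h => hqx (Fin.ext h)
      omega
    refine ⟨q, by rw [hpx]; exact hqlt, ?_⟩
    simp only [Function.comp_apply]
    rw [Equiv.swap_apply_of_ne_of_ne hqx (by intro h; rw [h] at hqlt; exact absurd (lt_trans hqlt (by rw [Fin.lt_def]; omega)) (lt_irrefl _))]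
    exact hq
  · by_cases hpy : p = y
    · -- v y = u x = k+2; use Y at x, witness q < x < y
      rw [hpy, Equiv.swap_apply_right] at hp
      obtain ⟨q, hqx, hq⟩ := hY x k hp
      have hqy : q ≠ y := by
        intro h; rw [h] at hqx
        exact absurd (lt_trans hqx (by rw [Fin.lt_def]; omega : x < y)) (lt_irrefl _)
      refine ⟨q, by rw [hpy]; exact lt_trans hqx (by rw [Fin.lt_def]; omega), ?_⟩
      simp only [Function.comp_apply]
      rw [Equiv.swap_apply_of_ne_of_ne (by intro h; rw [h] at hqx; exact lt_irrefl _ hqx) hqy]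
      exact hq
    · -- p ∉ {x, y}
      rw [Equiv.swap_apply_of_ne_of_ne hpx hpy] at hp
      obtain ⟨q, hqp, hq⟩ := hY p k hp
      by_cases hqx : q = x
      · -- u x = k+1 = witness; since q = x < p and p ≠ y, p > y; use position y
        have hyp : y < p := by
          rw [Fin.lt_def] at hqp ⊢
          rw [hqx] at hqp
          have : (p : ℕ) ≠ (y : ℕ) := fun h => hpy (Fin.ext h)
          omega
        refine ⟨y, hyp, ?_⟩
        simp only [Function.comp_apply, Equiv.swap_apply_right]
        rw [← hqx]; exact hq
      · by_cases hqy : q = y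
        · -- u y = k+1; use position x < y = q < p
          refine ⟨x, lt_trans (by rw [Fin.lt_def]; omega : x < y) (by rw [← hqy]; exact hqp), ?_⟩
          simp only [Function.comp_apply, Equiv.swap_apply_left]
          rw [← hqy]; exact hq
        · refine ⟨q, hqp, ?_⟩
          simp only [Function.comp_apply]
          rw [Equiv.swap_apply_of_ne_of_ne hqx hqy]
          exact hq

abbrev YB (n : ℕ) (c : Composition n) := {w : Fin n → ℕ // WordHasContent c w ∧ IsYWordF w}

open Classical in
lemma heckeOp_single (i : Fin (n - 1)) (w : YB n c) (r : ℚ) :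
    heckeOp n c i (Finsupp.single w r) =
      r • (if h : WordHasContent c (heckeWord i w.val) ∧ IsYWordF (heckeWord i w.val)
        then Finsupp.single (⟨heckeWord i w.val, h⟩ : YB n c) (1 : ℚ) else 0) := by
  rw [heckeOp, Finsupp.lsum_single, LinearMap.toSpanSingleton_apply]

open Classical in
lemma heckeOp_single_fixed (i : Fin (n - 1)) (w : YB n c)
    (hfix : heckeWord i w.val = w.val) (r : ℚ) :
    heckeOp n c i (Finsupp.single w r) = Finsupp.single w r := by
  rw [heckeOp_single]
  rw [dif_pos (by rw [hfix]; exact w.2)]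
  rw [Finsupp.smul_single]
  congr 1
  · exact Subtype.ext hfix
  · rw [smul_eq_mul, mul_one]

open Classical in
lemma heckeOp_single_swap (i : Fin (n - 1)) (u : YB n c)
    (hdesc : u.val (qI i) < u.val (pI i)) (r : ℚ)
    (w' : YB n c) (hw' : w'.val = u.val ∘ Equiv.swap (pI i) (qI i)) :
    heckeOp n c i (Finsupp.single w' r) = Finsupp.single u r := by
  have hkey : heckeWord i w'.val = u.val := by rw [hw']; exact heckeWord_of_swap i u.val hdesc
  rw [heckeOp_single]
  rw [dif_pos (by rw [hkey]; exact u.2)]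
  rw [Finsupp.smul_single]
  congr 1
  · exact Subtype.ext hkey
  · rw [smul_eq_mul, mul_one]

/-- if `heckeOp i F = F` then `F` has no support on words ascending at `i`. -/
lemma ascent_coeff_zero (i : Fin (n - 1)) (F : Vmod n c)
    (hF : heckeOp n c i F = F) (u : YB n c) (hu : u.val (pI i) < u.val (qI i)) :
    F u = 0 := by
  rw [← hF]
  rw [heckeOp]
  rw [Finsupp.lsum_apply, Finsupp.sum_apply]
  apply Finset.sum_eq_zero
  intro w _
  simp only [LinearMap.toSpanSingleton_apply, Finsupp.smul_apply]
  convert smul_zero (F w)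
  split
  · rw [Finsupp.single_apply, if_neg]
    intro heq
    have hv : heckeWord i w.val = u.val := congrArg Subtype.val heq
    have hna := heckeWord_not_ascent i w.val
    rw [hv] at hna
    exact hna hu
  · rfl

/-- the measure decreases under a descent swap -/
lemma nu_swap_lt {u : Fin n → ℕ} (i : Fin (n - 1)) (hdesc : u (qI i) < u (pI i)) :
    (∑ p : Fin n, (n - (p : ℕ)) * (u ∘ Equiv.swap (pI i) (qI i)) p) <
      ∑ p : Fin n, (n - (p : ℕ)) * u p := by
  have hne : pI i ≠ qI i := by
    intro h
    have : (pI i : ℕ) = (qI i : ℕ) := congrArg Fin.val h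
    simp [pI, qI] at this
  have hsplit : ∀ v : Fin n → ℕ, ∑ p : Fin n, (n - (p : ℕ)) * v p =
      (∑ p ∈ ({pI i, qI i} : Finset (Fin n)), (n - (p : ℕ)) * v p) +
      ∑ p ∈ ({pI i, qI i} : Finset (Fin n))ᶜ, (n - (p : ℕ)) * v p := by
    intro v
    rw [Finset.sum_add_sum_compl]
  rw [hsplit (u ∘ Equiv.swap (pI i) (qI i)), hsplit u]
  have hrest : ∑ p ∈ ({pI i, qI i} : Finset (Fin n))ᶜ, (n - (p : ℕ)) * (u ∘ Equiv.swap (pI i) (qI i)) p =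
      ∑ p ∈ ({pI i, qI i} : Finset (Fin n))ᶜ, (n - (p : ℕ)) * u p := by
    apply Finset.sum_congr rfl
    intro p hp
    simp only [Finset.mem_compl, Finset.mem_insert, Finset.mem_singleton, not_or] at hp
    rw [Function.comp_apply, Equiv.swap_apply_of_ne_of_ne hp.1 hp.2]
  rw [hrest]
  have hpair : ∀ v : Fin n → ℕ, ∑ p ∈ ({pI i, qI i} : Finset (Fin n)), (n - (p : ℕ)) * v p =
      (n - (pI i : ℕ)) * v (pI i) + (n - (qI i : ℕ)) * v (qI i) :=
    fun v => Finset.sum_pair hne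
  rw [hpair, hpair]
  simp only [Function.comp_apply, Equiv.swap_apply_left, Equiv.swap_apply_right]
  have h1 : (qI i : ℕ) < n := (qI i).isLt
  have h2 : (pI i : ℕ) + 1 = (qI i : ℕ) := by simp [pI, qI]
  have hA : n - (pI i : ℕ) = (n - (qI i : ℕ)) + 1 := by omega
  rw [hA, add_mul, add_mul, one_mul, one_mul]
  linarith [hdesc]


end Aux

/-- For every composition `α` of `n`, the `H_n(0)`-module `V_α = M_α/N_α` is
indecomposable: every idempotent module endomorphism (a linear endomorphism
commuting with the 0-Hecke action) is `0` or the identity. -/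
theorem Vmod_indecomposable (n : ℕ) (c : Composition n)
    (f : Vmod n c →ₗ[ℚ] Vmod n c)
    (hcomm : ∀ i : Fin (n - 1), f ∘ₗ heckeOp n c i = heckeOp n c i ∘ₗ f)
    (hidem : f ∘ₗ f = f) :
    f = 0 ∨ f = LinearMap.id := by
  classical
  have hcomm' : ∀ (i : Fin (n - 1)) (x : Vmod n c),
      f (heckeOp n c i x) = heckeOp n c i (f x) := by
    intro i x
    have := LinearMap.congr_fun (hcomm i) x
    simpa using this
  set E : YB n c := ⟨eword c, eword_content c, eword_isY c⟩ with hE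
  set F := f (Finsupp.single E 1) with hFdef
  have hfixE : ∀ i : Fin (n - 1), c.index (pI i) = c.index (qI i) →
      heckeOp n c i (Finsupp.single E (1 : ℚ)) = Finsupp.single E 1 := by
    intro i hi
    apply heckeOp_single_fixed
    show heckeWord i (eword c) = eword c
    rw [heckeWord_def, if_neg]
    show ¬ (eword c (pI i) < eword c (qI i))
    simp only [eword, hi]
    omega
  have hFfix : ∀ i : Fin (n - 1), c.index (pI i) = c.index (qI i) →
      heckeOp n c i F = F := by
    intro i hi
    rw [hFdef, ← hcomm' i, hfixE i hi]
  set a := F E with ha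
  have hFsingle : F = Finsupp.single E a := by
    ext u
    by_cases hu : u = E
    · rw [hu, ha, Finsupp.single_eq_same]
    · rw [Finsupp.single_apply, if_neg (fun h => hu h.symm)]
      have hne : u.val ≠ eword c := by
        intro h
        exact hu (Subtype.ext (by rw [h]))
      have hnd : ¬ ∀ i : Fin (n - 1), c.index (pI i) = c.index (qI i) →
          u.val (qI i) ≤ u.val (pI i) :=
        fun hdec => hne (eq_eword_of_blockdec c u.2.1 u.2.2 hdec)
      push_neg at hnd
      obtain ⟨i, hi, hasc⟩ := hnd
      exact ascent_coeff_zero c i F (hFfix i hi) u hasc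
  have haa : a * a = a := by
    have h1 : f F = F := by
      rw [hFdef, ← LinearMap.comp_apply, hidem]
    have h2 : f F = a • F := by
      conv_lhs => rw [hFsingle]
      have hsm : Finsupp.single E a = a • Finsupp.single E (1 : ℚ) := by
        rw [Finsupp.smul_single', mul_one]
      conv_lhs => rw [hsm, map_smul, ← hFdef]
    have h3 : (a • F) E = F E := by rw [← h2, h1]
    rw [Finsupp.smul_apply, ← ha, smul_eq_mul] at h3
    exact h3
  have key : ∀ k : ℕ, ∀ u : YB n c, (∑ p : Fin n, (n - (p : ℕ)) * u.val p) = k →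
      f (Finsupp.single u 1) = a • Finsupp.single u 1 := by
    intro k
    induction k using Nat.strong_induction_on with
    | _ k IHk =>
      intro u hk
      by_cases hd : ∃ i : Fin (n - 1), u.val (qI i) < u.val (pI i)
      · obtain ⟨i, hdesc⟩ := hd
        set w' : YB n c := ⟨u.val ∘ Equiv.swap (pI i) (qI i),
          content_swap c u.2.1 _ _, isY_swap u.2.2 i hdesc⟩ with hw'
        have hnu : (∑ p : Fin n, (n - (p : ℕ)) * w'.val p) < k := by
          rw [← hk]
          exact nu_swap_lt i hdesc
        have hIH := IHk _ hnu w' rfl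
        have hop : heckeOp n c i (Finsupp.single w' (1 : ℚ)) = Finsupp.single u 1 :=
          heckeOp_single_swap c i u hdesc 1 w' rfl
        rw [← hop, hcomm' i, hIH, map_smul, hop]
      · push_neg at hd
        have hinc : ∀ i : Fin (n - 1), u.val (pI i) ≤ u.val (qI i) := hd
        have huE : u = E := Subtype.ext (eq_eword_of_inc c u.2.1 u.2.2 hinc)
        rw [huE, ← hFdef, hFsingle]
        rw [Finsupp.smul_single', mul_one]
  rcases mul_eq_zero.mp (by rw [mul_sub, mul_one, haa, sub_self] : a * (a - 1) = 0) with h | h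
  · left
    apply Finsupp.lhom_ext
    intro u b
    have h1 : Finsupp.single u b = b • Finsupp.single u (1 : ℚ) := by
      rw [Finsupp.smul_single', mul_one]
    rw [h1, map_smul, key _ u rfl, h, zero_smul, smul_zero, LinearMap.zero_apply]
  · right
    have ha1 : a = 1 := by linarith [sub_eq_zero.mp h]
    apply Finsupp.lhom_ext
    intro u b
    have h1 : Finsupp.single u b = b • Finsupp.single u (1 : ℚ) := by
      rw [Finsupp.smul_single', mul_one]
    rw [h1, map_smul, key _ u rfl, ha1, one_smul, LinearMap.id_apply]
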